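/- Given a nonzero Gaussian integer s with |x| < |s| for some Gaussian integer x, there exists a unit v ∈ {±1, ±i} such that |s − v x| < |s|. -/

import Mathlib

noncomputable section
open scoped Classical
open Filter MeasureTheory

/-- `Z[i]⁺`: Gaussian integers with positive real part and nonnegative imaginary part
(one representative per associate class of nonzero elements). -/
def posRep (z : GaussianInt) : Prop := 0 < z.re ∧ 0 ≤ z.im

/-- The Gaussian Möbius function: `1` on units, `(-1)^k` on squarefree elements with `k`
prime factors, and `0` otherwise. -/
def muI (q : GaussianInt) : ℤ :=
  if IsUnit q then 1
  else if Squarefree q then (-1) ^ Multiset.card (UniqueFactorizationMonoid.factors q)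
  else 0

/-- The Gaussian Euler totient `φ_i(q) = |(Z[i]/qZ[i])ˣ|`. -/
def phiI (q : GaussianInt) : ℕ := Nat.card ((GaussianInt ⧸ Ideal.span {q})ˣ)

/-- The sum-of-two-squares counting function. -/
def r2 (n : ℕ) : ℕ := Nat.card {p : ℤ × ℤ // p.1 ^ 2 + p.2 ^ 2 = (n : ℤ)}

/-- The closed unit square in the first quadrant of `ℂ`. -/
def I2 : Set ℂ := {z : ℂ | 0 ≤ z.re ∧ z.re ≤ 1 ∧ 0 ≤ z.im ∧ z.im ≤ 1}

/-- The region inside the disc of radius `S` about `0` and outside at least one of the four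
discs of radius `S` centred at `±s`, `±is`. -/
def omegaReg (S : ℝ) (s : GaussianInt) : Set ℂ :=
  {z : ℂ | ‖z‖ ≤ S ∧
    ∃ u : GaussianInt, IsUnit u ∧ S < ‖z + GaussianInt.toComplex (u * s)‖}

theorem exists_unit_rotation (s x : GaussianInt) (hs : s ≠ 0) (hx : x ≠ 0)
    (h : x.norm < s.norm) :
    ∃ v : GaussianInt, IsUnit v ∧ (s - v * x).norm < s.norm := by
  have hxe : x.re ≠ 0 ∨ x.im ≠ 0 := by
    by_contra hc
    push_neg at hc
    exact hx (Zsqrtd.ext hc.1 hc.2)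
  have hnx : 0 < x.norm := by
    rcases hxe with h1 | h1 <;>
      · rw [Zsqrtd.norm_def]; nlinarith [mul_self_pos.mpr h1, mul_self_nonneg x.re, mul_self_nonneg x.im]
  set a := s.re * x.re + s.im * x.im with ha
  set b := s.im * x.re - s.re * x.im with hb
  have hkey : a ^ 2 + b ^ 2 = s.norm * x.norm := by
    rw [Zsqrtd.norm_def, Zsqrtd.norm_def]; ring
  have hmax : x.norm ^ 2 < 4 * max (a ^ 2) (b ^ 2) := by
    have h2 : 2 * (a ^ 2 + b ^ 2) ≤ 4 * max (a ^ 2) (b ^ 2) := by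
      rcases le_total (a ^ 2) (b ^ 2) with hh | hh
      · rw [max_eq_right hh]; linarith
      · rw [max_eq_left hh]; linarith
    nlinarith
  have hns : (s - 1 * x).norm = s.norm + x.norm - 2 * a := by
    simp only [one_mul, Zsqrtd.norm_def, Zsqrtd.re_sub, Zsqrtd.im_sub]; ring
  have hns' : (s - (-1) * x).norm = s.norm + x.norm + 2 * a := by
    simp only [Zsqrtd.norm_def, Zsqrtd.re_sub, Zsqrtd.im_sub, Zsqrtd.re_mul, Zsqrtd.im_mul,
      Zsqrtd.re_neg, Zsqrtd.im_neg, Zsqrtd.re_one, Zsqrtd.im_one]; ring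
  have hi : ((⟨0, 1⟩ : GaussianInt) * x).re = -x.im ∧ ((⟨0, 1⟩ : GaussianInt) * x).im = x.re := by
    constructor <;> simp [Zsqrtd.re_mul, Zsqrtd.im_mul]
  have hi' : ((⟨0, -1⟩ : GaussianInt) * x).re = x.im ∧ ((⟨0, -1⟩ : GaussianInt) * x).im = -x.re := by
    constructor <;> simp [Zsqrtd.re_mul, Zsqrtd.im_mul]
  have hnsi : (s - (⟨0, 1⟩ : GaussianInt) * x).norm = s.norm + x.norm - 2 * b := by
    rw [Zsqrtd.norm_def, Zsqrtd.re_sub, Zsqrtd.im_sub, hi.1, hi.2, Zsqrtd.norm_def,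
      Zsqrtd.norm_def]; ring
  have hnsi' : (s - (⟨0, -1⟩ : GaussianInt) * x).norm = s.norm + x.norm + 2 * b := by
    rw [Zsqrtd.norm_def, Zsqrtd.re_sub, Zsqrtd.im_sub, hi'.1, hi'.2, Zsqrtd.norm_def,
      Zsqrtd.norm_def]; ring
  have hui : IsUnit (⟨0, 1⟩ : GaussianInt) :=
    IsUnit.of_mul_eq_one (⟨0, -1⟩ : GaussianInt) (by
      refine Zsqrtd.ext ?_ ?_ <;> simp [Zsqrtd.re_mul, Zsqrtd.im_mul])
  have hui' : IsUnit (⟨0, -1⟩ : GaussianInt) :=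
    IsUnit.of_mul_eq_one (⟨0, 1⟩ : GaussianInt) (by
      refine Zsqrtd.ext ?_ ?_ <;> simp [Zsqrtd.re_mul, Zsqrtd.im_mul])
  rcases le_total (a ^ 2) (b ^ 2) with hab | hab
  · rw [max_eq_right hab] at hmax
    rcases le_total 0 b with hbs | hbs
    · exact ⟨⟨0, 1⟩, hui, by rw [hnsi]; nlinarith⟩
    · exact ⟨⟨0, -1⟩, hui', by rw [hnsi']; nlinarith⟩
  · rw [max_eq_left hab] at hmax
    rcases le_total 0 a with has | has
    · exact ⟨1, isUnit_one, by rw [hns]; nlinarith⟩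
    · exact ⟨-1, (isUnit_one).neg, by rw [hns']; nlinarith⟩
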